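/- Let M be a connected real-analytic manifold and let 𝓕 be an admissible sheaf of local vector fields on M which is real-analytic and analytically determined. Assume that every p ∈ M admits an open connected neighborhood 𝒱_p with the following property: for every q ∈ 𝒱_p and every 𝓕-germ 𝔤 ∈ 𝔊^𝓕_q, there exists a real-analytic vector field X ∈ 𝔛^ω(𝒱_p) whose germ at q (i.e., the equivalence class of vector fields agreeing with X on some connected open neighborhood of q) equals 𝔤. Then 𝓕 is regular. -/

import Mathlib

open Set Manifold Topology

noncomputable section

variable {E : Type*} [NormedAddCommGroup E] [NormedSpace ℝ E]
  {H : Type*} [TopologicalSpace H]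

/-- A (raw) vector field on the manifold `M`, given by a choice of tangent vector at every
point.  A *local* vector field defined on an open set `U ⊆ M` is represented by such a global
assignment, where only the values on `U` are relevant. -/
abbrev VF (I : ModelWithCorners ℝ E H) (M : Type*) [TopologicalSpace M] [ChartedSpace H M] :
    Type _ :=
  (x : M) → TangentSpace I x

variable (I : ModelWithCorners ℝ E H) (M : Type*) [TopologicalSpace M] [ChartedSpace H M]
  [IsManifold I (⊤ : ℕ∞) M]

/-- Smoothness (`C^∞`) of a vector field on a subset `U` of `M`, as smoothness of the
corresponding section of the tangent bundle. -/
def IsSmoothVFOn (X : VF I M) (U : Set M) : Prop :=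
  ContMDiffOn I I.tangent (⊤ : ℕ∞) (fun x => (⟨x, X x⟩ : TangentBundle I M)) U

/-- A sheaf of local vector fields on the manifold `M`: to every connected open set `U ⊆ M` it
assigns a linear subspace `carrier U` of the smooth vector fields on `U` (represented by global
assignments of tangent vectors, two of which describe the same local field on `U` iff they agree
on `U`), closed under restriction to connected open subsets and satisfying the gluing axiom. -/
structure VFSheaf where
  carrier : Set M → Set (VF I M)
  smooth_mem : ∀ U, IsOpen U → IsConnected U → ∀ X ∈ carrier U, IsSmoothVFOn I M X U
  zero_mem : ∀ U, IsOpen U → IsConnected U → (0 : VF I M) ∈ carrier U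
  add_mem : ∀ U, IsOpen U → IsConnected U → ∀ X ∈ carrier U, ∀ Y ∈ carrier U, X + Y ∈ carrier U
  smul_mem : ∀ U, IsOpen U → IsConnected U → ∀ (c : ℝ), ∀ X ∈ carrier U, c • X ∈ carrier U
  congr_mem : ∀ U, IsOpen U → IsConnected U → ∀ X ∈ carrier U, ∀ Y : VF I M,
    (∀ x ∈ U, Y x = X x) → Y ∈ carrier U
  restrict_mem : ∀ U, IsOpen U → IsConnected U → ∀ V, IsOpen V → IsConnected V → V ⊆ U →
    ∀ X ∈ carrier U, X ∈ carrier V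
  glue_mem : ∀ U, IsOpen U → IsConnected U → ∀ S : Set (Set M),
    (∀ V ∈ S, IsOpen V ∧ IsConnected V) → U = ⋃₀ S → ∀ X : VF I M, IsSmoothVFOn I M X U →
    (∀ V ∈ S, X ∈ carrier V) → X ∈ carrier U

variable {I M}

/-- The unique continuation property for a sheaf of local vector fields: a field of the sheaf
on a connected open set vanishing on some non-empty open subset vanishes identically. -/
def VFSheaf.UniqueContinuation (F : VFSheaf I M) : Prop :=
  ∀ U, IsOpen U → IsConnected U → ∀ X ∈ F.carrier U,
    (∃ V : Set M, V.Nonempty ∧ IsOpen V ∧ V ⊆ U ∧ ∀ x ∈ V, X x = 0) → ∀ x ∈ U, X x = 0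

variable (I M) in
/-- Restriction of global tangent-vector assignments to a subset `U`, as a linear map. -/
def resVF (U : Set M) : VF I M →ₗ[ℝ] ((x : U) → TangentSpace I (x : M)) where
  toFun X := fun x => X x
  map_add' _ _ := rfl
  map_smul' _ _ := rfl

/-- The dimension (as a cardinal) of the space `𝓕(U)` of local fields of the sheaf `F` on `U`,
computed as the rank of the space of restrictions to `U` of members of `F.carrier U`. -/
def fdim (F : VFSheaf I M) (U : Set M) : Cardinal :=
  Module.rank ℝ ↥(Submodule.span ℝ (resVF I M U '' F.carrier U))

/-- A sheaf of local vector fields has bounded rank if the dimensions of the spaces `𝓕(U)`,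
`U` connected open, are uniformly bounded. -/
def VFSheaf.BoundedRank (F : VFSheaf I M) : Prop :=
  ∃ N : ℕ, ∀ U : Set M, IsOpen U → IsConnected U → fdim F U ≤ (N : Cardinal)

/-- A sheaf of local vector fields is admissible if it has the unique continuation property
and bounded rank. -/
def VFSheaf.Admissible (F : VFSheaf I M) : Prop :=
  F.UniqueContinuation ∧ F.BoundedRank

/-- `κ^𝓕_p`: the supremum (= maximum) of `dim 𝓕(U)` over connected open neighbourhoods `U`
of `p`. -/
def kappa (F : VFSheaf I M) (p : M) : Cardinal :=
  ⨆ U : {U : Set M // IsOpen U ∧ IsConnected U ∧ p ∈ U}, fdim F (U : Set M)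

/-- A sheaf of local vector fields is regular if `p ↦ κ^𝓕_p` is constant on `M`. -/
def VFSheaf.Regular (F : VFSheaf I M) : Prop :=
  ∀ p q : M, kappa F p = kappa F q

section Germs

variable (I M) in
/-- The subspace of tangent-vector assignments vanishing on some connected open neighbourhood
of `p`; the quotient by this subspace is the space of germs at `p`. -/
def germNull [LocallyConnectedSpace M] (p : M) : Submodule ℝ (VF I M) where
  carrier := {X | ∃ V : Set M, IsOpen V ∧ IsConnected V ∧ p ∈ V ∧ ∀ x ∈ V, X x = 0}
  zero_mem' :=
    ⟨connectedComponentIn univ p, isOpen_univ.connectedComponentIn,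
      isConnected_connectedComponentIn_iff.mpr (mem_univ p),
      mem_connectedComponentIn (mem_univ p), fun _ _ => rfl⟩
  add_mem' := by
    rintro X Y ⟨V₁, hV₁o, hV₁c, hpV₁, hX⟩ ⟨V₂, hV₂o, hV₂c, hpV₂, hY⟩
    refine ⟨connectedComponentIn (V₁ ∩ V₂) p, (hV₁o.inter hV₂o).connectedComponentIn,
      isConnected_connectedComponentIn_iff.mpr ⟨hpV₁, hpV₂⟩,
      mem_connectedComponentIn ⟨hpV₁, hpV₂⟩, fun x hx => ?_⟩
    have hx' := connectedComponentIn_subset (V₁ ∩ V₂) p hx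
    show X x + Y x = 0
    rw [hX x hx'.1, hY x hx'.2, add_zero]
  smul_mem' := by
    rintro c X ⟨V, hVo, hVc, hpV, hX⟩
    exact ⟨V, hVo, hVc, hpV, fun x hx => by show c • X x = 0; rw [hX x hx, smul_zero]⟩

variable (I M) in
/-- The space of germs at `p` of (arbitrary) local vector fields on `M`. -/
abbrev GermSpace [LocallyConnectedSpace M] (p : M) : Type _ :=
  VF I M ⧸ germNull I M p

variable (I M) in
/-- The germ at `p` of a local vector field, as a linear map. -/
def germAt [LocallyConnectedSpace M] (p : M) : VF I M →ₗ[ℝ] GermSpace I M p :=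
  (germNull I M p).mkQ

/-- `𝔊^𝓕_p`: the space of germs at `p` of local `𝓕`-fields of the sheaf `F`, i.e. germs at `p`
of fields `K ∈ 𝓕(U)` with `U` a connected open neighbourhood of `p`. -/
def stalk [LocallyConnectedSpace M] (F : VFSheaf I M) (p : M) :
    Submodule ℝ (GermSpace I M p) :=
  Submodule.span ℝ {g | ∃ U : Set M, ∃ X : VF I M,
    IsOpen U ∧ IsConnected U ∧ p ∈ U ∧ X ∈ F.carrier U ∧ g = germAt I M p X}

/-- A connected open set `U ∋ p` is `𝓕`-special for `p` if the (linear) germ map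
`𝓕(U) → 𝔊^𝓕_p` is a linear isomorphism, i.e. it is injective (fields in `𝓕(U)` with the same
germ at `p` agree on `U`) and surjective onto the space of `𝓕`-germs at `p`. -/
def IsSpecial [LocallyConnectedSpace M] (F : VFSheaf I M) (U : Set M) (p : M) : Prop :=
  IsOpen U ∧ IsConnected U ∧ p ∈ U ∧
    (∀ K₁ ∈ F.carrier U, ∀ K₂ ∈ F.carrier U,
      germAt I M p K₁ = germAt I M p K₂ → ∀ x ∈ U, K₁ x = K₂ x) ∧
    (∀ g ∈ stalk F p, ∃ K ∈ F.carrier U, germAt I M p K = g)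

/-- A transport of `𝓕`-germs along the curve `γ : [a,b] → M`: a family of germs
`g t ∈ 𝔊^𝓕_{γ t}` which is locally induced by a single local field of the sheaf `F`. -/
def IsTransport [LocallyConnectedSpace M] (F : VFSheaf I M) (a b : ℝ) (γ : ℝ → M)
    (g : (t : ℝ) → GermSpace I M (γ t)) : Prop :=
  ∀ t₀ ∈ Icc a b, ∃ ε > (0 : ℝ), ∃ U : Set M, ∃ K : VF I M,
    IsOpen U ∧ IsConnected U ∧ K ∈ F.carrier U ∧
    ∀ t ∈ Ioo (t₀ - ε) (t₀ + ε) ∩ Icc a b, γ t ∈ U ∧ g t = germAt I M (γ t) K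

end Germs

section Analytic

variable {E₁ : Type*} [NormedAddCommGroup E₁] [NormedSpace ℝ E₁]
  {H₁ : Type*} [TopologicalSpace H₁]
  {E₂ : Type*} [NormedAddCommGroup E₂] [NormedSpace ℝ E₂]
  {H₂ : Type*} [TopologicalSpace H₂]

variable (I₁ : ModelWithCorners ℝ E₁ H₁) (I₂ : ModelWithCorners ℝ E₂ H₂)

/-- Real-analyticity, on a set `U`, of a map between charted spaces: around every point of `U`
the map, read in the preferred extended charts, is real-analytic (within the chart image
of `U`). -/
def MAnalyticOn {M₁ : Type*} [TopologicalSpace M₁] [ChartedSpace H₁ M₁]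
    {M₂ : Type*} [TopologicalSpace M₂] [ChartedSpace H₂ M₂]
    (f : M₁ → M₂) (U : Set M₁) : Prop :=
  ∀ x ∈ U, AnalyticWithinAt ℝ (writtenInExtChartAt I₁ I₂ x f)
    ((extChartAt I₁ x).symm ⁻¹' U ∩ Set.range I₁) (extChartAt I₁ x x)

variable {I₁} in
/-- A real-analytic vector field on `U ⊆ M`: the associated section of the tangent bundle is
real-analytic on `U`. -/
def AnalyticVFOn {M₁ : Type*} [TopologicalSpace M₁] [ChartedSpace H₁ M₁]
    [IsManifold I₁ (⊤ : ℕ∞) M₁] (X : VF I₁ M₁) (U : Set M₁) : Prop :=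
  MAnalyticOn I₁ I₁.tangent (fun x => (⟨x, X x⟩ : TangentBundle I₁ M₁)) U

end Analytic

section AnalyticallyDetermined

variable [IsManifold I (⊤ : ℕ∞) M]

/-- A sheaf of local vector fields is real-analytic if all its local fields are real-analytic
vector fields. -/
def VFSheaf.RealAnalytic (F : VFSheaf I M) : Prop :=
  ∀ U : Set M, IsOpen U → IsConnected U → ∀ X ∈ F.carrier U, AnalyticVFOn X U

/-- A real-analytic sheaf `𝓕` is analytically determined if for every open set `U` there is a
collection `𝓐 U` of maps sending real-analytic vector fields on `U` to real-analytic functions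
`U → ℝ` (depending only on the values of the field on `U`), such that (a) the restriction to an
open subset `V ⊆ U` of `Fn X`, `Fn ∈ 𝓐 U`, is realized by some member of `𝓐 V`, and (b) a
real-analytic vector field `X` on a connected open set `U` belongs to `𝓕(U)` if and only if
`Fn X` vanishes identically on `U` for all `Fn ∈ 𝓐 U`. -/
def VFSheaf.AnalyticallyDetermined (F : VFSheaf I M) : Prop :=
  ∃ 𝓐 : Set M → Set (VF I M → M → ℝ),
    (∀ U : Set M, IsOpen U → ∀ Fn ∈ 𝓐 U, ∀ X : VF I M, AnalyticVFOn X U →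
      MAnalyticOn I (𝓘(ℝ, ℝ)) (Fn X) U ∧
      ∀ Y : VF I M, AnalyticVFOn Y U → (∀ x ∈ U, X x = Y x) → ∀ x ∈ U, Fn X x = Fn Y x) ∧
    (∀ U V : Set M, IsOpen U → IsOpen V → V ⊆ U → ∀ Fn ∈ 𝓐 U,
      ∀ X : VF I M, AnalyticVFOn X U → ∃ Gn ∈ 𝓐 V, ∀ x ∈ V, Fn X x = Gn X x) ∧
    (∀ U : Set M, IsOpen U → IsConnected U → ∀ X : VF I M, AnalyticVFOn X U →
      (X ∈ F.carrier U ↔ ∀ Fn ∈ 𝓐 U, ∀ x ∈ U, Fn X x = 0))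

end AnalyticallyDetermined

/-- The old Mathlib `AnalyticManifold` (removed since): the chart changes are analytic, i.e. the
manifold has the groupoid `analyticGroupoid I`, read in `E` through `I` on `I.symm ⁻¹' s ∩ range I`. -/
class AnalyticManifold {𝕜 : Type*} [NontriviallyNormedField 𝕜] {E : Type*} [NormedAddCommGroup E]
    [NormedSpace 𝕜 E] {H : Type*} [TopologicalSpace H] (I : ModelWithCorners 𝕜 E H)
    (M : Type*) [TopologicalSpace M] [ChartedSpace H M] : Prop where
  compatible : ∀ {e e' : OpenPartialHomeomorph M H}, e ∈ atlas H M → e' ∈ atlas H M →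
    AnalyticOn 𝕜 (I ∘ (e.symm ≫ₕ e') ∘ I.symm) (I.symm ⁻¹' (e.symm ≫ₕ e').source ∩ range I)


section Aux

lemma aux_ev_zero {g : E → ℝ} {t O : Set E} (hO : IsOpen O)
    (hg : AnalyticOnNhd ℝ g O) (htO : t ⊆ O) (ht : UniqueDiffOn ℝ t)
    (h0 : ∀ z ∈ t, g z = 0) {y : E} (hy : y ∈ t) : g =ᶠ[𝓝 y] 0 := by
  have hiter : ∀ n, ∀ z ∈ t, iteratedFDeriv ℝ n g z = 0 := by
    intro n
    induction n with
    | zero =>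
      intro z hz; ext v; simp [h0 z hz]
    | succ n ih =>
      intro z hz
      have hdiff : DifferentiableAt ℝ (iteratedFDeriv ℝ n g) z :=
        ((hg.iteratedFDeriv_of_isOpen hO n) z (htO hz)).differentiableAt
      have h1 : fderivWithin ℝ (iteratedFDeriv ℝ n g) t z = 0 := by
        have hcongr : fderivWithin ℝ (iteratedFDeriv ℝ n g) t z
            = fderivWithin ℝ (fun _ => (0 : ContinuousMultilinearMap ℝ
              (fun _ : Fin n => E) ℝ)) t z :=
          fderivWithin_congr (fun w hw => ih w hw) (ih z hz)
        rw [hcongr, fderivWithin_const_apply _]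
      have h2 : fderiv ℝ (iteratedFDeriv ℝ n g) z = 0 := by
        rw [← hdiff.fderivWithin (ht z hz), h1]
      rw [iteratedFDeriv_succ_eq_comp_left]
      show (continuousMultilinearCurryLeftEquiv ℝ (fun _ : Fin (n+1) => E) ℝ).symm
        (fderiv ℝ (iteratedFDeriv ℝ n g) z) = 0
      rw [h2]
      exact (continuousMultilinearCurryLeftEquiv ℝ (fun _ : Fin (n+1) => E) ℝ).symm.map_zero
  obtain ⟨p, r, hpr⟩ := hg y (htO hy)
  have hz0 : ∀ w ∈ EMetric.ball (0 : E) r, g (y + w) = 0 := by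
    intro w hw
    have hs := hpr.hasSum_iteratedFDeriv hw
    have hzero : (fun n => ((n.factorial : ℝ))⁻¹ • (iteratedFDeriv ℝ n g y) fun _ => w)
        = fun _ => (0 : ℝ) := by
      funext n; rw [hiter n y hy]; simp
    rw [hzero] at hs
    exact hs.unique hasSum_zero
  have hmem : EMetric.ball y r ∈ 𝓝 y := EMetric.ball_mem_nhds y hpr.r_pos
  filter_upwards [hmem] with z hz'
  have h3 : z = y + (z - y) := by abel
  have h4 : z - y ∈ EMetric.ball (0 : E) r := by
    refine EMetric.mem_ball.mpr ?_
    rw [show (0 : E) = y - y by simp, edist_sub_right]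
    exact EMetric.mem_ball.mp hz'
  show g z = 0
  rw [h3]; exact hz0 _ h4


variable {I : ModelWithCorners ℝ E H} {M : Type*} [TopologicalSpace M] [ChartedSpace H M]

lemma manalytic_eq_zero {f : M → ℝ} {U V : Set M}
    (hUo : IsOpen U) (hUc : IsConnected U)
    (hf : MAnalyticOn I (𝓘(ℝ, ℝ)) f U)
    (hVo : IsOpen V) (hVne : V.Nonempty) (hVU : V ⊆ U)
    (hfV : ∀ x ∈ V, f x = 0) : ∀ x ∈ U, f x = 0 := by
  set S : Set M := {x | x ∈ U ∧ ∃ W : Set M, IsOpen W ∧ x ∈ W ∧ ∀ z ∈ W ∩ U, f z = 0} with hS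
  have hSopen : IsOpen S := by
    rw [isOpen_iff_mem_nhds]
    rintro x ⟨hxU, W, hWo, hxW, hWz⟩
    have hmem : W ∩ U ∈ 𝓝 x := (hWo.inter hUo).mem_nhds ⟨hxW, hxU⟩
    exact Filter.mem_of_superset hmem (fun z hz => ⟨hz.2, W, hWo, hz.1, hWz⟩)
  have hclosed : ∀ x ∈ U, x ∈ closure S → x ∈ S := by
    intro x hxU hxcl
    set φ := extChartAt I x with hφ
    set s : Set E := φ.symm ⁻¹' U ∩ range I with hs'
    have h1 : AnalyticWithinAt ℝ (f ∘ φ.symm) s (φ x) := by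
      have h0 := hf x hxU
      have heq : writtenInExtChartAt I (𝓘(ℝ, ℝ)) x f = f ∘ φ.symm := by
        funext z
        simp only [writtenInExtChartAt, extChartAt_model_space_eq_id, Function.comp_apply,
          PartialEquiv.refl_coe, id_eq]
        rfl
      rwa [heq] at h0
    obtain ⟨g, hgx, hEq, hg⟩ := h1.exists_analyticAt
    obtain ⟨ra, hra, hball⟩ : ∃ ra > 0, Metric.ball (φ x) ra ⊆ {z | AnalyticAt ℝ g z} :=
      Metric.mem_nhds_iff.mp hg.eventually_analyticAt
    obtain ⟨Ot, hOto, hyOt, hOt⟩ : ∃ Ot, IsOpen Ot ∧ φ x ∈ Ot ∧ Ot ∩ range I ⊆ φ.target :=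
      mem_nhdsWithin.mp (extChartAt_target_mem_nhdsWithin (I := I) x)
    set Ω₀ := Metric.ball (φ x) ra ∩ Ot with hΩ₀
    have hΩ₀o : IsOpen Ω₀ := Metric.isOpen_ball.inter hOto
    have hyΩ₀ : φ x ∈ Ω₀ := ⟨Metric.mem_ball_self hra, hyOt⟩
    set P := φ.source ∩ φ ⁻¹' Ω₀ with hPdef
    have hPopen : IsOpen P :=
      (continuousOn_extChartAt x).isOpen_inter_preimage (isOpen_extChartAt_source x) hΩ₀o
    have hxP : x ∈ P := ⟨mem_extChartAt_source x, hyΩ₀⟩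
    obtain ⟨x', hx'P, hx'S⟩ : ∃ x', x' ∈ P ∧ x' ∈ S := by
      rcases mem_closure_iff_nhds.mp hxcl P (hPopen.mem_nhds hxP) with ⟨x', hx'1, hx'2⟩
      exact ⟨x', hx'1, hx'2⟩
    obtain ⟨hx'U, W, hWo, hx'W, hWzero⟩ := hx'S
    have hx'src : x' ∈ φ.source := hx'P.1
    set y' := φ x' with hy'
    have hy'Ω₀ : y' ∈ Ω₀ := hx'P.2
    have hy'rng : y' ∈ range I := extChartAt_target_subset_range x (φ.map_source hx'src)
    have hsymm_y' : φ.symm y' = x' := φ.left_inv hx'src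
    obtain ⟨O₂, hO₂o, hy'O₂, hO₂⟩ : ∃ O₂, IsOpen O₂ ∧ y' ∈ O₂ ∧
        O₂ ∩ φ.target ⊆ φ.symm ⁻¹' (W ∩ U) := by
      have hcont : ContinuousWithinAt φ.symm φ.target y' :=
        (continuousOn_extChartAt_symm x) y' (φ.map_source hx'src)
      have hmem : φ.symm ⁻¹' (W ∩ U) ∈ 𝓝[φ.target] y' :=
        hcont ((hWo.inter hUo).mem_nhds (by rw [hsymm_y']; exact ⟨hx'W, hx'U⟩))
      exact mem_nhdsWithin.mp hmem
    set A := range I ∩ (Ω₀ ∩ O₂) with hA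
    have hy'A : y' ∈ A := ⟨hy'rng, hy'Ω₀, hy'O₂⟩
    have hAtarget : A ⊆ φ.target := fun z hz => hOt ⟨hz.2.1.2, hz.1⟩
    have hAWU : ∀ z ∈ A, φ.symm z ∈ W ∩ U := fun z hz => hO₂ ⟨hz.2.2, hAtarget hz⟩
    have hAs : A ⊆ s := fun z hz => ⟨(hAWU z hz).2, hz.1⟩
    have hAzero : ∀ z ∈ A, g z = 0 := by
      intro z hz
      rw [← hEq (mem_insert_of_mem _ (hAs hz))]
      exact hWzero _ (hAWU z hz)
    have hAball : A ⊆ Metric.ball (φ x) ra := fun z hz => hz.2.1.1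
    have hAud : UniqueDiffOn ℝ A := by
      intro z hz
      have hud : UniqueDiffWithinAt ℝ (range I) z := I.uniqueDiffOn z hz.1
      exact (uniqueDiffWithinAt_inter ((hΩ₀o.inter hO₂o).mem_nhds hz.2)).mpr hud
    have hgan : AnalyticOnNhd ℝ g (Metric.ball (φ x) ra) := fun z hz => hball hz
    have hev : g =ᶠ[𝓝 y'] 0 := aux_ev_zero Metric.isOpen_ball hgan hAball hAud hAzero hy'A
    have hgz : EqOn g 0 (Metric.ball (φ x) ra) :=
      hgan.eqOn_zero_of_preconnected_of_eventuallyEq_zero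
        (convex_ball _ _).isPreconnected (hAball hy'A) hev
    refine ⟨hxU, P, hPopen, hxP, ?_⟩
    intro z hz
    have hzsrc : z ∈ φ.source := hz.1.1
    have hzΩ₀ : φ z ∈ Ω₀ := hz.1.2
    have hzs : φ z ∈ s :=
      ⟨by rw [mem_preimage, φ.left_inv hzsrc]; exact hz.2,
        extChartAt_target_subset_range x (φ.map_source hzsrc)⟩
    have hfz : f z = g (φ z) := by
      have h5 := hEq (mem_insert_of_mem _ hzs)
      simpa [Function.comp, φ.left_inv hzsrc] using h5
    rw [hfz]
    exact hgz hzΩ₀.1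
  have hVS : V ⊆ S := fun v hv => ⟨hVU hv, V, hVo, hv, fun z hz => hfV z hz.1⟩
  have hsub : U ⊆ S := by
    intro x hx
    by_contra hxS
    obtain ⟨v, hv⟩ := hVne
    have hP := hUc.isPreconnected
    have hcover : U ⊆ S ∪ (closure S)ᶜ := by
      intro z hzU
      by_cases h : z ∈ closure S
      · exact Or.inl (hclosed z hzU h)
      · exact Or.inr h
    have hne2 : (U ∩ (closure S)ᶜ).Nonempty :=
      ⟨x, hx, fun hc => hxS (hclosed x hx hc)⟩
    have hne1 : (U ∩ S).Nonempty := ⟨v, hVU hv, hVS hv⟩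
    obtain ⟨z, _, hz1, hz2⟩ := hP S (closure S)ᶜ hSopen isClosed_closure.isOpen_compl hcover hne1 hne2
    exact hz2 (subset_closure hz1)
  intro x hx
  obtain ⟨-, W, hWo, hxW, h⟩ := hsub hx
  exact h x ⟨hxW, hx⟩


variable [IsManifold I (⊤ : ℕ∞) M]

/-- restriction of families of tangent vectors, as a linear map -/
def resLin (V U : Set M) (h : V ⊆ U) :
    ((x : U) → TangentSpace I (x : M)) →ₗ[ℝ] ((x : V) → TangentSpace I (x : M)) where
  toFun f := fun x => f ⟨x.1, h x.2⟩
  map_add' _ _ := rfl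
  map_smul' _ _ := rfl

lemma carrier_span (F : VFSheaf I M) {U : Set M} (hUo : IsOpen U) (hUc : IsConnected U) :
    ∀ f ∈ Submodule.span ℝ (resVF I M U '' F.carrier U), ∃ X ∈ F.carrier U, f = resVF I M U X := by
  intro f hf
  induction hf using Submodule.span_induction with
  | mem x h => obtain ⟨X, hX, rfl⟩ := h; exact ⟨X, hX, rfl⟩
  | zero => exact ⟨0, F.zero_mem U hUo hUc, (map_zero _).symm⟩
  | add x y hx hy ihx ihy =>
    obtain ⟨X, hX, rfl⟩ := ihx
    obtain ⟨Y, hY, rfl⟩ := ihy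
    exact ⟨X + Y, F.add_mem U hUo hUc X hX Y hY, (map_add _ _ _).symm⟩
  | smul c x hx ihx =>
    obtain ⟨X, hX, rfl⟩ := ihx
    exact ⟨c • X, F.smul_mem U hUo hUc c X hX, (map_smul _ _ _).symm⟩

lemma fdim_le_of_subset (F : VFSheaf I M) (hUC : F.UniqueContinuation) {U V : Set M}
    (hUo : IsOpen U) (hUc : IsConnected U) (hVo : IsOpen V) (hVc : IsConnected V)
    (hVU : V ⊆ U) (hVne : V.Nonempty) : fdim F U ≤ fdim F V := by
  classical
  set L := resLin (I := I) V U hVU with hL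
  have hmap : ∀ f ∈ Submodule.span ℝ (resVF I M U '' F.carrier U),
      L f ∈ Submodule.span ℝ (resVF I M V '' F.carrier V) := by
    intro f hf
    obtain ⟨X, hX, rfl⟩ := carrier_span F hUo hUc f hf
    exact Submodule.subset_span ⟨X, F.restrict_mem U hUo hUc V hVo hVc hVU X hX, rfl⟩
  have hinj : Function.Injective (L.restrict hmap) := by
    intro a b hab
    have hval : L a.1 = L b.1 := congrArg Subtype.val hab
    have hsubm : a.1 - b.1 ∈ Submodule.span ℝ (resVF I M U '' F.carrier U) := sub_mem a.2 b.2
    obtain ⟨X, hX, hXe⟩ := carrier_span F hUo hUc _ hsubm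
    have hX0 : ∀ x ∈ V, X x = 0 := by
      intro x hx
      have h1 : L (a.1 - b.1) = 0 := by rw [map_sub, hval, sub_self]
      have h2 := congrFun (hXe ▸ h1) (⟨x, hx⟩ : V)
      exact h2
    have hXU : ∀ x ∈ U, X x = 0 := hUC U hUo hUc X hX ⟨V, hVne, hVo, hVU, hX0⟩
    have hzero : a.1 - b.1 = 0 := by
      rw [hXe]; funext x; exact hXU x.1 x.2
    exact Subtype.ext (sub_eq_zero.mp hzero)
  exact LinearMap.rank_le_of_injective (L.restrict hmap) hinj

lemma fdim_le_of_extension (F : VFSheaf I M) {W V : Set M}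
    (hWo : IsOpen W) (hWc : IsConnected W) (hVo : IsOpen V) (hVc : IsConnected V)
    (hWV : W ⊆ V)
    (hsur : ∀ X ∈ F.carrier W, ∃ K ∈ F.carrier V, ∀ x ∈ W, K x = X x) :
    fdim F W ≤ fdim F V := by
  classical
  set L := resLin (I := I) W V hWV with hL
  have hmap : ∀ f ∈ Submodule.span ℝ (resVF I M V '' F.carrier V),
      L f ∈ Submodule.span ℝ (resVF I M W '' F.carrier W) := by
    intro f hf
    obtain ⟨X, hX, rfl⟩ := carrier_span F hVo hVc f hf
    exact Submodule.subset_span ⟨X, F.restrict_mem V hVo hVc W hWo hWc hWV X hX, rfl⟩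
  have hsurj : Function.Surjective (L.restrict hmap) := by
    rintro ⟨f, hf⟩
    obtain ⟨X, hX, rfl⟩ := carrier_span F hWo hWc f hf
    obtain ⟨K, hK, hKX⟩ := hsur X hX
    refine ⟨⟨resVF I M V K, Submodule.subset_span ⟨K, hK, rfl⟩⟩, ?_⟩
    apply Subtype.ext
    funext x
    exact hKX x.1 x.2
  exact LinearMap.rank_le_of_surjective (L.restrict hmap) hsurj

lemma AnalyticVFOn.mono' {X : VF I M} {U V : Set M} (h : AnalyticVFOn X U) (hVU : V ⊆ U) :
    AnalyticVFOn X V := by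
  intro x hx
  exact (h x (hVU hx)).mono (inter_subset_inter (preimage_mono hVU) subset_rfl)

variable [LocallyConnectedSpace M]

lemma stalk_rep (F : VFSheaf I M) {q : M} {g : GermSpace I M q} (hg : g ∈ stalk F q) :
    ∃ W : Set M, ∃ X : VF I M, IsOpen W ∧ IsConnected W ∧ q ∈ W ∧ X ∈ F.carrier W ∧
      g = germAt I M q X := by
  induction hg using Submodule.span_induction with
  | mem x h => exact h
  | zero =>
    refine ⟨connectedComponentIn univ q, 0, isOpen_univ.connectedComponentIn,
      isConnected_connectedComponentIn_iff.mpr (mem_univ q),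
      mem_connectedComponentIn (mem_univ q), ?_, (map_zero _).symm⟩
    exact F.zero_mem _ isOpen_univ.connectedComponentIn
      (isConnected_connectedComponentIn_iff.mpr (mem_univ q))
  | add x y hx hy ihx ihy =>
    obtain ⟨W₁, X₁, h1o, h1c, h1q, h1m, rfl⟩ := ihx
    obtain ⟨W₂, X₂, h2o, h2c, h2q, h2m, rfl⟩ := ihy
    have hWo : IsOpen (connectedComponentIn (W₁ ∩ W₂) q) :=
      (h1o.inter h2o).connectedComponentIn
    have hWc : IsConnected (connectedComponentIn (W₁ ∩ W₂) q) :=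
      isConnected_connectedComponentIn_iff.mpr ⟨h1q, h2q⟩
    have hqW : q ∈ connectedComponentIn (W₁ ∩ W₂) q := mem_connectedComponentIn ⟨h1q, h2q⟩
    have hsub := connectedComponentIn_subset (W₁ ∩ W₂) q
    have hm1 : X₁ ∈ F.carrier (connectedComponentIn (W₁ ∩ W₂) q) :=
      F.restrict_mem W₁ h1o h1c _ hWo hWc (fun x hx => (hsub hx).1) X₁ h1m
    have hm2 : X₂ ∈ F.carrier (connectedComponentIn (W₁ ∩ W₂) q) :=
      F.restrict_mem W₂ h2o h2c _ hWo hWc (fun x hx => (hsub hx).2) X₂ h2m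
    exact ⟨_, X₁ + X₂, hWo, hWc, hqW, F.add_mem _ hWo hWc X₁ hm1 X₂ hm2, (map_add _ _ _).symm⟩
  | smul c x hx ihx =>
    obtain ⟨W₁, X₁, h1o, h1c, h1q, h1m, rfl⟩ := ihx
    exact ⟨W₁, c • X₁, h1o, h1c, h1q, F.smul_mem W₁ h1o h1c c X₁ h1m, (map_smul _ _ _).symm⟩

lemma germ_eq_iff {q : M} {X Y : VF I M} :
    germAt I M q X = germAt I M q Y ↔
      ∃ Vn : Set M, IsOpen Vn ∧ IsConnected Vn ∧ q ∈ Vn ∧ ∀ x ∈ Vn, X x = Y x := by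
  constructor
  · intro h
    have h' : X - Y ∈ germNull I M q := (Submodule.Quotient.eq _).mp h
    obtain ⟨Vn, h1, h2, h3, h4⟩ := h'
    exact ⟨Vn, h1, h2, h3, fun x hx => sub_eq_zero.mp (h4 x hx)⟩
  · rintro ⟨Vn, h1, h2, h3, h4⟩
    have h' : X - Y ∈ germNull I M q := ⟨Vn, h1, h2, h3, fun x hx => sub_eq_zero.mpr (h4 x hx)⟩
    show (germNull I M q).mkQ X = (germNull I M q).mkQ Y
    rw [Submodule.mkQ_apply, Submodule.mkQ_apply]
    exact (Submodule.Quotient.eq _).mpr h' 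

end Aux

/-- Let `M` be a connected real-analytic manifold and `𝓕` an admissible,
real-analytic, analytically determined sheaf of local vector fields.  If every point `p ∈ M`
has an open connected neighbourhood `𝒱_p` such that every `𝓕`-germ at every point `q ∈ 𝒱_p`
is the germ of a real-analytic vector field defined on all of `𝒱_p`, then `𝓕` is regular. -/
theorem statement13 [AnalyticManifold I M] [LocallyConnectedSpace M] [ConnectedSpace M]
    (F : VFSheaf I M) (hF : F.Admissible)
    (hra : F.RealAnalytic) (had : F.AnalyticallyDetermined)
    (hext : ∀ p : M, ∃ Vp : Set M, IsOpen Vp ∧ IsConnected Vp ∧ p ∈ Vp ∧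
      ∀ q ∈ Vp, ∀ g ∈ stalk F q, ∃ X : VF I M,
        AnalyticVFOn X Vp ∧ germAt I M q X = g) :
    F.Regular := by
  obtain ⟨hUC, -⟩ := hF
  obtain ⟨𝓐, h𝓐₁, h𝓐₂, h𝓐₃⟩ := had
  have key : ∀ p : M, ∃ V : Set M, IsOpen V ∧ IsConnected V ∧ p ∈ V ∧
      ∀ q ∈ V, kappa F q = fdim F V := by
    intro p
    obtain ⟨Vp, hVo, hVc, hpV, hVext⟩ := hext p
    have ext' : ∀ q ∈ Vp, ∀ W : Set M, IsOpen W → IsConnected W → q ∈ W → W ⊆ Vp →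
        ∀ X ∈ F.carrier W, ∃ K ∈ F.carrier Vp, ∀ x ∈ W, K x = X x := by
      intro q hq W hWo hWc hqW hWVp X hX
      have hgst : germAt I M q X ∈ stalk F q :=
        Submodule.subset_span ⟨W, X, hWo, hWc, hqW, hX, rfl⟩
      obtain ⟨Xa, hXa_an, hXa_germ⟩ := hVext q hq _ hgst
      obtain ⟨V'', hV''o, hV''c, hqV'', hV''eq⟩ := germ_eq_iff.mp hXa_germ
      set V := connectedComponentIn (V'' ∩ W) q with hVdef
      have hVo' : IsOpen V := (hV''o.inter hWo).connectedComponentIn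
      have hVc' : IsConnected V := isConnected_connectedComponentIn_iff.mpr ⟨hqV'', hqW⟩
      have hqV : q ∈ V := mem_connectedComponentIn ⟨hqV'', hqW⟩
      have hVsub := connectedComponentIn_subset (V'' ∩ W) q
      have hVW : V ⊆ W := fun x hx => (hVsub hx).2
      have hVV'' : V ⊆ V'' := fun x hx => (hVsub hx).1
      have hVVp : V ⊆ Vp := fun x hx => hWVp (hVW hx)
      have hXV : X ∈ F.carrier V := F.restrict_mem W hWo hWc V hVo' hVc' hVW X hX
      have hXaV : Xa ∈ F.carrier V :=
        F.congr_mem V hVo' hVc' X hXV Xa (fun x hx => hV''eq x (hVV'' hx))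
      have hXa_anV : AnalyticVFOn Xa V := hXa_an.mono' hVVp
      have hXaVp : Xa ∈ F.carrier Vp := by
        rw [h𝓐₃ Vp hVo hVc Xa hXa_an]
        intro Fn hFn
        have hman : MAnalyticOn I (𝓘(ℝ, ℝ)) (Fn Xa) Vp := (h𝓐₁ Vp hVo Fn hFn Xa hXa_an).1
        obtain ⟨Gn, hGn, hGneq⟩ := h𝓐₂ Vp V hVo hVo' hVVp Fn hFn Xa hXa_an
        have hzero : ∀ x ∈ V, Fn Xa x = 0 := by
          intro x hx
          rw [hGneq x hx]
          exact (h𝓐₃ V hVo' hVc' Xa hXa_anV).mp hXaV Gn hGn x hx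
        exact manalytic_eq_zero hVo hVc hman hVo' ⟨q, hqV⟩ hVVp hzero
      refine ⟨Xa, hXaVp, ?_⟩
      have hXaW : Xa ∈ F.carrier W := F.restrict_mem Vp hVo hVc W hWo hWc hWVp Xa hXaVp
      have hYW : Xa + (-1 : ℝ) • X ∈ F.carrier W :=
        F.add_mem W hWo hWc Xa hXaW _ (F.smul_mem W hWo hWc (-1) X hX)
      have hY0 : ∀ x ∈ W, (Xa + (-1 : ℝ) • X) x = 0 := by
        refine hUC W hWo hWc _ hYW ⟨V, ⟨q, hqV⟩, hVo', hVW, ?_⟩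
        intro x hx
        show Xa x + (-1 : ℝ) • X x = 0
        rw [hV''eq x (hVV'' hx), neg_one_smul, add_neg_cancel]
      intro x hx
      have h2 : Xa x + (-1 : ℝ) • X x = 0 := hY0 x hx
      rw [neg_one_smul] at h2
      exact add_neg_eq_zero.mp h2
    refine ⟨Vp, hVo, hVc, hpV, ?_⟩
    intro q hq
    apply le_antisymm
    · show (⨆ U : {U : Set M // IsOpen U ∧ IsConnected U ∧ q ∈ U},
        fdim F (U : Set M)) ≤ fdim F Vp
      have : Nonempty {U : Set M // IsOpen U ∧ IsConnected U ∧ q ∈ U} := ⟨⟨Vp, hVo, hVc, hq⟩⟩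
      refine ciSup_le ?_
      rintro ⟨U, hUo', hUc', hqU⟩
      have hWo : IsOpen (connectedComponentIn (U ∩ Vp) q) :=
        (hUo'.inter hVo).connectedComponentIn
      have hWc : IsConnected (connectedComponentIn (U ∩ Vp) q) :=
        isConnected_connectedComponentIn_iff.mpr ⟨hqU, hq⟩
      have hqWq : q ∈ connectedComponentIn (U ∩ Vp) q := mem_connectedComponentIn ⟨hqU, hq⟩
      have hsub := connectedComponentIn_subset (U ∩ Vp) q
      have h1 : fdim F U ≤ fdim F (connectedComponentIn (U ∩ Vp) q) :=
        fdim_le_of_subset F hUC hUo' hUc' hWo hWc (fun x hx => (hsub hx).1) ⟨q, hqWq⟩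
      have h2 : fdim F (connectedComponentIn (U ∩ Vp) q) ≤ fdim F Vp :=
        fdim_le_of_extension F hWo hWc hVo hVc (fun x hx => (hsub hx).2)
          (fun X hX => ext' q hq _ hWo hWc hqWq (fun x hx => (hsub hx).2) X hX)
      exact h1.trans h2
    · exact le_ciSup (Cardinal.bddAbove_range _) (⟨Vp, hVo, hVc, hq⟩ :
        {U : Set M // IsOpen U ∧ IsConnected U ∧ q ∈ U})
  intro p q
  set s : Set M := {r | kappa F r = kappa F p} with hsdef
  have hso : IsOpen s := by
    rw [isOpen_iff_mem_nhds]
    intro r hr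
    obtain ⟨V, hVo, hVc, hrV, hVk⟩ := key r
    refine Filter.mem_of_superset (hVo.mem_nhds hrV) (fun r' hr' => ?_)
    show kappa F r' = kappa F p
    rw [hVk r' hr', ← hVk r hrV]
    exact hr
  have hsc : IsOpen sᶜ := by
    rw [isOpen_iff_mem_nhds]
    intro r hr
    obtain ⟨V, hVo, hVc, hrV, hVk⟩ := key r
    refine Filter.mem_of_superset (hVo.mem_nhds hrV) (fun r' hr' h => hr ?_)
    show kappa F r = kappa F p
    rw [hVk r hrV, ← hVk r' hr']
    exact h
  have huniv : s = univ := by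
    rcases isClopen_iff.mp ⟨isOpen_compl_iff.mp hsc, hso⟩ with h | h
    · exfalso
      have hps : p ∈ s := rfl
      rw [h] at hps
      exact notMem_empty p hps
    · exact h
  have hqs : q ∈ s := huniv ▸ mem_univ q
  exact (hqs : kappa F q = kappa F p).symm
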